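/- For integers a, b ≥ 2, the a×b grid graph G_{a,b} satisfies dem(G_{a,b}) = max{a,b}. -/
import Mathlib


open SimpleGraph

/-- `e` is monitored by vertex `x` in `G`: some vertex `y` has its distance to `x`
changed when `e` is deleted (distances in `ℕ∞`, `⊤` if disconnected). -/
def monitors {V : Type*} (G : SimpleGraph V) (x : V) (e : Sym2 V) : Prop :=
  ∃ y : V, G.edist x y ≠ (G.deleteEdges {e}).edist x y

/-- `M` is a distance-edge-monitoring set of `G`. -/
def IsDEMSet {V : Type*} (G : SimpleGraph V) (M : Set V) : Prop :=
  ∀ e ∈ G.edgeSet, ∃ x ∈ M, monitors G x e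

/-- The smallest size of a distance-edge-monitoring set of `G`. -/
noncomputable def dem (V : Type*) [Fintype V] (G : SimpleGraph V) : ℕ :=
  sInf {k | ∃ M : Finset V, M.card = k ∧ IsDEMSet G ↑M}

/-- The set `P(M, e)` of pairs `(x, y)`, `x ∈ M`, whose distance changes when `e` is deleted. -/
def pairs {V : Type*} (G : SimpleGraph V) (M : Set V) (e : Sym2 V) : Set (V × V) :=
  {p | p.1 ∈ M ∧ G.edist p.1 p.2 ≠ (G.deleteEdges {e}).edist p.1 p.2}

/-- `C` is a vertex cover of `G`. -/
def IsVC {V : Type*} (G : SimpleGraph V) (C : Set V) : Prop :=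
  ∀ e ∈ G.edgeSet, ∃ v ∈ C, v ∈ e

/-- The vertex cover number of `G`. -/
noncomputable def vcNum (V : Type*) [Fintype V] (G : SimpleGraph V) : ℕ :=
  sInf {k | ∃ C : Finset V, C.card = k ∧ IsVC G ↑C}

/-- The feedback edge set number: minimum number of edges whose deletion leaves a forest. -/
noncomputable def fes (V : Type*) [Fintype V] (G : SimpleGraph V) : ℕ :=
  sInf {k | ∃ F : Finset (Sym2 V), F.card = k ∧ (G.deleteEdges ↑F).IsAcyclic}


namespace DemGrid

variable {a b : ℕ}

abbrev GG (a b : ℕ) : SimpleGraph (Fin a × Fin b) :=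
  SimpleGraph.pathGraph a □ SimpleGraph.pathGraph b

/-- Manhattan distance. -/
def D (x y : Fin a × Fin b) : ℕ := Nat.dist x.1 y.1 + Nat.dist x.2 y.2

lemma natDist_eq (n m : ℕ) : Nat.dist n m = n - m + (m - n) := rfl

lemma path_adj_dist {n : ℕ} {u v : Fin n} (h : (pathGraph n).Adj u v) :
    Nat.dist ↑u ↑v = 1 := by
  rcases pathGraph_adj.mp h with h | h <;> rw [natDist_eq] <;> omega

lemma D_adj {x w : Fin a × Fin b} (h : (GG a b).Adj x w) : D x w = 1 := by
  rcases boxProd_adj.mp h with ⟨h1, h2⟩ | ⟨h1, h2⟩ <;>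
    simp [D, h2, path_adj_dist h1, Nat.dist_self]

lemma length_ge_D : ∀ {x y : Fin a × Fin b} (W : (GG a b).Walk x y), D x y ≤ W.length := by
  intro x y W
  induction W with
  | nil => simp [D, Nat.dist_self]
  | @cons x w y h W ih =>
    have h1 := Nat.dist.triangle_inequality (x.1 : ℕ) w.1 y.1
    have h2 := Nat.dist.triangle_inequality (x.2 : ℕ) w.2 y.2
    have h3 := D_adj h
    simp only [Walk.length_cons]
    simp only [D] at *
    omega


/-- walk along a row, increasing column -/
lemma rowWalk_aux (i : Fin a) : ∀ (k : ℕ) (q s : Fin b), (↑q : ℕ) + k = ↑s →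
    ∃ W : (GG a b).Walk (i, q) (i, s), W.length = k ∧
      ∀ e ∈ W.edges, ∃ t t' : Fin b, e = s((i, t), (i, t')) := by
  intro k
  induction k with
  | zero =>
    intro q s h
    have : q = s := Fin.ext (by omega)
    subst this
    exact ⟨.nil, by simp, by simp⟩
  | succ k ih =>
    intro q s h
    have hq1 : (↑q + 1 : ℕ) < b := by have := s.isLt; omega
    have hadj : (GG a b).Adj (i, q) (i, ⟨↑q + 1, hq1⟩) := by
      refine boxProd_adj.mpr (Or.inr ⟨?_, rfl⟩)
      exact pathGraph_adj.mpr (Or.inl rfl)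
    obtain ⟨W, hl, he⟩ := ih ⟨↑q + 1, hq1⟩ s (by simpa using by omega)
    refine ⟨.cons hadj W, by simp [hl], ?_⟩
    intro e hee
    rcases List.mem_cons.mp (by simpa using hee) with h1 | h1
    · exact ⟨q, ⟨↑q + 1, hq1⟩, h1⟩
    · exact he e h1

lemma rowWalk (i : Fin a) (q s : Fin b) :
    ∃ W : (GG a b).Walk (i, q) (i, s), W.length = Nat.dist ↑q ↑s ∧
      ∀ e ∈ W.edges, ∃ t t' : Fin b, e = s((i, t), (i, t')) := by
  rcases le_total (↑q : ℕ) ↑s with h | h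
  · obtain ⟨W, hl, he⟩ := rowWalk_aux i ((↑s : ℕ) - ↑q) q s (by omega)
    exact ⟨W, by rw [hl, Nat.dist_eq_sub_of_le h], he⟩
  · obtain ⟨W, hl, he⟩ := rowWalk_aux i ((↑q : ℕ) - ↑s) s q (by omega)
    refine ⟨W.reverse, by simp [hl, Nat.dist_eq_sub_of_le_right h], ?_⟩
    intro e hee
    exact he e (by simpa using hee)

lemma colWalk_aux (j : Fin b) : ∀ (k : ℕ) (q s : Fin a), (↑q : ℕ) + k = ↑s →
    ∃ W : (GG a b).Walk (q, j) (s, j), W.length = k ∧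
      ∀ e ∈ W.edges, ∃ t t' : Fin a, e = s((t, j), (t', j)) := by
  intro k
  induction k with
  | zero =>
    intro q s h
    have : q = s := Fin.ext (by omega)
    subst this
    exact ⟨.nil, by simp, by simp⟩
  | succ k ih =>
    intro q s h
    have hq1 : (↑q + 1 : ℕ) < a := by have := s.isLt; omega
    have hadj : (GG a b).Adj (q, j) (⟨↑q + 1, hq1⟩, j) := by
      refine boxProd_adj.mpr (Or.inl ⟨?_, rfl⟩)
      exact pathGraph_adj.mpr (Or.inl rfl)
    obtain ⟨W, hl, he⟩ := ih ⟨↑q + 1, hq1⟩ s (by simpa using by omega)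
    refine ⟨.cons hadj W, by simp [hl], ?_⟩
    intro e hee
    rcases List.mem_cons.mp (by simpa using hee) with h1 | h1
    · exact ⟨q, ⟨↑q + 1, hq1⟩, h1⟩
    · exact he e h1

lemma colWalk (j : Fin b) (q s : Fin a) :
    ∃ W : (GG a b).Walk (q, j) (s, j), W.length = Nat.dist ↑q ↑s ∧
      ∀ e ∈ W.edges, ∃ t t' : Fin a, e = s((t, j), (t', j)) := by
  rcases le_total (↑q : ℕ) ↑s with h | h
  · obtain ⟨W, hl, he⟩ := colWalk_aux j ((↑s : ℕ) - ↑q) q s (by omega)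
    exact ⟨W, by rw [hl, Nat.dist_eq_sub_of_le h], he⟩
  · obtain ⟨W, hl, he⟩ := colWalk_aux j ((↑q : ℕ) - ↑s) s q (by omega)
    refine ⟨W.reverse, by simp [hl, Nat.dist_eq_sub_of_le_right h], ?_⟩
    intro e hee
    exact he e (by simpa using hee)


lemma grid_edist (x y : Fin a × Fin b) : (GG a b).edist x y = (D x y : ℕ∞) := by
  apply le_antisymm
  · obtain ⟨W1, h1, -⟩ := rowWalk x.1 x.2 y.2
    obtain ⟨W2, h2, -⟩ := colWalk y.2 x.1 y.1
    have := SimpleGraph.edist_le (W1.append W2)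
    rw [Walk.length_append, h1, h2] at this
    refine this.trans ?_
    simp only [D]
    norm_cast
    omega
  · rcases eq_or_ne ((GG a b).edist x y) ⊤ with ht | ht
    · simp [ht]
    · obtain ⟨p, hp⟩ := SimpleGraph.exists_walk_of_edist_ne_top ht
      rw [← hp]
      exact_mod_cast length_ge_D p

lemma del_length_ge_D {s : Set (Sym2 (Fin a × Fin b))} {x y : Fin a × Fin b}
    (W : ((GG a b).deleteEdges s).Walk x y) : D x y ≤ W.length := by
  have hsub : ∀ e ∈ W.edges, e ∈ (GG a b).edgeSet := fun e he =>
    (SimpleGraph.edgeSet_mono (SimpleGraph.deleteEdges_le s)) (W.edges_subset_edgeSet he)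
  have := length_ge_D (W.transfer (GG a b) hsub)
  rwa [Walk.length_transfer] at this

lemma del_edist_ge_D {s : Set (Sym2 (Fin a × Fin b))} (x y : Fin a × Fin b) :
    (D x y : ℕ∞) ≤ ((GG a b).deleteEdges s).edist x y := by
  rcases eq_or_ne (((GG a b).deleteEdges s).edist x y) ⊤ with ht | ht
  · simp [ht]
  · obtain ⟨p, hp⟩ := SimpleGraph.exists_walk_of_edist_ne_top ht
    rw [← hp]
    exact_mod_cast del_length_ge_D p

/-- Every walk of minimal length along a row crossing the edge's columns must use it. -/
lemma horiz_forced {i : Fin a} {u v : Fin b} (huv : (↑u : ℕ) + 1 = ↑v) :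
    ∀ (x y : Fin a × Fin b) (W : (GG a b).Walk x y),
      x.1 = i → y.1 = i → (↑x.2 : ℕ) ≤ ↑u → (↑v : ℕ) ≤ ↑y.2 →
      W.length = (↑y.2 : ℕ) - ↑x.2 → s((i, u), (i, v)) ∈ W.edges := by
  intro x y W
  induction W with
  | nil =>
    intro h1 h2 h3 h4 h5
    exact absurd h4 (by omega)
  | @cons x w y h W ih =>
    intro h1 h2 h3 h4 h5
    rw [Walk.length_cons] at h5
    have hlW := length_ge_D W
    rcases boxProd_adj.mp h with ⟨ha, hb⟩ | ⟨ha, hb⟩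
    · -- row changes: contradiction
      exfalso
      have hd1 : Nat.dist ↑w.1 ↑y.1 = 1 := by
        have : (↑x.1 : ℕ) = ↑y.1 := by rw [h1, h2]
        rcases pathGraph_adj.mp ha with hh | hh <;>
          rw [Nat.dist_comm, natDist_eq] <;> omega
      have hd2 : Nat.dist ↑w.2 ↑y.2 = (↑y.2 : ℕ) - ↑x.2 := by
        rw [← hb, natDist_eq]; omega
      simp only [D, hd1, hd2] at hlW
      omega
    · -- column changes
      have hw1 : w.1 = i := by rw [← hb, h1]
      rcases pathGraph_adj.mp ha with hh | hh
      · -- column increases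
        rcases eq_or_lt_of_le h3 with heq | hlt
        · -- this step is the edge
          have hx : x = (i, u) := Prod.ext h1 (Fin.ext heq)
          have hwv : w = (i, v) := Prod.ext hw1 (Fin.ext (show (↑w.2 : ℕ) = ↑v by omega))
          have hedge : s(x, w) = s((i, u), (i, v)) := by rw [hx, hwv]
          rw [Walk.edges_cons]
          exact List.mem_cons.mpr (Or.inl hedge.symm)
        · refine List.mem_cons_of_mem _ (ih hw1 h2 (by omega) h4 ?_)
          omega
      · -- column decreases: contradiction
        exfalso
        have hd2 : Nat.dist ↑w.2 ↑y.2 = (↑y.2 : ℕ) - ↑x.2 + 1 := by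
          rw [natDist_eq]; omega
        have hd1 : Nat.dist ↑w.1 ↑y.1 = 0 := by
          rw [hw1, h2, Nat.dist_self]
        simp only [D, hd1, hd2] at hlW
        omega


lemma vert_forced {j : Fin b} {u v : Fin a} (huv : (↑u : ℕ) + 1 = ↑v) :
    ∀ (x y : Fin a × Fin b) (W : (GG a b).Walk x y),
      x.2 = j → y.2 = j → (↑x.1 : ℕ) ≤ ↑u → (↑v : ℕ) ≤ ↑y.1 →
      W.length = (↑y.1 : ℕ) - ↑x.1 → s((u, j), (v, j)) ∈ W.edges := by
  intro x y W
  induction W with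
  | nil =>
    intro h1 h2 h3 h4 h5
    exact absurd h4 (by omega)
  | @cons x w y h W ih =>
    intro h1 h2 h3 h4 h5
    rw [Walk.length_cons] at h5
    have hlW := length_ge_D W
    rcases boxProd_adj.mp h with ⟨ha, hb⟩ | ⟨ha, hb⟩
    · -- row changes
      have hw2 : w.2 = j := by rw [← hb, h1]
      rcases pathGraph_adj.mp ha with hh | hh
      · rcases eq_or_lt_of_le h3 with heq | hlt
        · have hx : x = (u, j) := Prod.ext (Fin.ext heq) h1
          have hwv : w = (v, j) := Prod.ext (Fin.ext (show (↑w.1 : ℕ) = ↑v by omega)) hw2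
          have hedge : s(x, w) = s((u, j), (v, j)) := by rw [hx, hwv]
          rw [Walk.edges_cons]
          exact List.mem_cons.mpr (Or.inl hedge.symm)
        · refine List.mem_cons_of_mem _ (ih hw2 h2 (by omega) h4 ?_)
          omega
      · exfalso
        have hd1 : Nat.dist ↑w.1 ↑y.1 = (↑y.1 : ℕ) - ↑x.1 + 1 := by
          rw [natDist_eq]; omega
        have hd2 : Nat.dist ↑w.2 ↑y.2 = 0 := by
          rw [hw2, h2, Nat.dist_self]
        simp only [D, hd1, hd2] at hlW
        omega
    · -- column changes: contradiction
      exfalso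
      have hd2 : Nat.dist ↑w.2 ↑y.2 = 1 := by
        have : (↑x.2 : ℕ) = ↑y.2 := by rw [h1, h2]
        rcases pathGraph_adj.mp ha with hh | hh <;>
          rw [Nat.dist_comm, natDist_eq] <;> omega
      have hd1 : Nat.dist ↑w.1 ↑y.1 = (↑y.1 : ℕ) - ↑x.1 := by
        rw [← hb, natDist_eq]; omega
      simp only [D, hd1, hd2] at hlW
      omega


lemma monitors_horiz' (i : Fin a) (q : Fin b) {u v : Fin b} (huv : (↑u : ℕ) + 1 = ↑v) :
    monitors (GG a b) (i, q) s((i, u), (i, v)) := by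
  set e : Sym2 (Fin a × Fin b) := s((i, u), (i, v)) with he
  have henot : e ∉ ((GG a b).deleteEdges {e}).edgeSet := by
    simp [edgeSet_deleteEdges]
  have hsub : ∀ {x y : Fin a × Fin b} (p : ((GG a b).deleteEdges {e}).Walk x y),
      ∀ f ∈ p.edges, f ∈ (GG a b).edgeSet := fun p f hf =>
    (SimpleGraph.edgeSet_mono (SimpleGraph.deleteEdges_le _)) (p.edges_subset_edgeSet hf)
  rcases le_or_gt (↑q : ℕ) ↑u with hq | hq
  · refine ⟨(i, v), fun hEq => ?_⟩
    rw [grid_edist] at hEq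
    have hne : ((GG a b).deleteEdges {e}).edist (i, q) (i, v) ≠ ⊤ := by
      rw [← hEq]; exact (by simp : (D ((i:Fin a), q) (i, v) : ℕ∞) ≠ ⊤)
    obtain ⟨p, hp⟩ := SimpleGraph.exists_walk_of_edist_ne_top hne
    rw [← hEq] at hp
    have hlen : p.length = D (i, q) (i, v) := by exact_mod_cast hp
    have hmem := horiz_forced huv (i, q) (i, v) (p.transfer _ (hsub p)) rfl rfl hq le_rfl
      (by rw [Walk.length_transfer, hlen]; simp [D, Nat.dist_self, natDist_eq]; omega)
    rw [Walk.edges_transfer] at hmem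
    exact henot (p.edges_subset_edgeSet hmem)
  · refine ⟨(i, u), fun hEq => ?_⟩
    rw [grid_edist] at hEq
    have hne : ((GG a b).deleteEdges {e}).edist (i, q) (i, u) ≠ ⊤ := by
      rw [← hEq]; exact (by simp : (D ((i:Fin a), q) (i, u) : ℕ∞) ≠ ⊤)
    obtain ⟨p, hp⟩ := SimpleGraph.exists_walk_of_edist_ne_top hne
    rw [← hEq] at hp
    have hlen : p.length = D (i, q) (i, u) := by exact_mod_cast hp
    have hsub' : ∀ f ∈ p.reverse.edges, f ∈ (GG a b).edgeSet := by
      intro f hf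
      exact hsub p f (by simpa using hf)
    have hmem := horiz_forced huv (i, u) (i, q) (p.reverse.transfer _ hsub') rfl rfl le_rfl
      (show (↑v : ℕ) ≤ ↑q by omega)
      (by rw [Walk.length_transfer, Walk.length_reverse, hlen]
          simp [D, Nat.dist_self, natDist_eq]; omega)
    rw [Walk.edges_transfer] at hmem
    have : e ∈ p.edges := by simpa using hmem
    exact henot (p.edges_subset_edgeSet this)

lemma monitors_vert' (j : Fin b) (q : Fin a) {u v : Fin a} (huv : (↑u : ℕ) + 1 = ↑v) :
    monitors (GG a b) (q, j) s((u, j), (v, j)) := by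
  set e : Sym2 (Fin a × Fin b) := s((u, j), (v, j)) with he
  have henot : e ∉ ((GG a b).deleteEdges {e}).edgeSet := by
    simp [edgeSet_deleteEdges]
  have hsub : ∀ {x y : Fin a × Fin b} (p : ((GG a b).deleteEdges {e}).Walk x y),
      ∀ f ∈ p.edges, f ∈ (GG a b).edgeSet := fun p f hf =>
    (SimpleGraph.edgeSet_mono (SimpleGraph.deleteEdges_le _)) (p.edges_subset_edgeSet hf)
  rcases le_or_gt (↑q : ℕ) ↑u with hq | hq
  · refine ⟨(v, j), fun hEq => ?_⟩
    rw [grid_edist] at hEq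
    have hne : ((GG a b).deleteEdges {e}).edist (q, j) (v, j) ≠ ⊤ := by
      rw [← hEq]; exact (by simp : (D (q, (j:Fin b)) (v, j) : ℕ∞) ≠ ⊤)
    obtain ⟨p, hp⟩ := SimpleGraph.exists_walk_of_edist_ne_top hne
    rw [← hEq] at hp
    have hlen : p.length = D (q, j) (v, j) := by exact_mod_cast hp
    have hmem := vert_forced huv (q, j) (v, j) (p.transfer _ (hsub p)) rfl rfl hq le_rfl
      (by rw [Walk.length_transfer, hlen]; simp [D, Nat.dist_self, natDist_eq]; omega)
    rw [Walk.edges_transfer] at hmem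
    exact henot (p.edges_subset_edgeSet hmem)
  · refine ⟨(u, j), fun hEq => ?_⟩
    rw [grid_edist] at hEq
    have hne : ((GG a b).deleteEdges {e}).edist (q, j) (u, j) ≠ ⊤ := by
      rw [← hEq]; exact (by simp : (D (q, (j:Fin b)) (u, j) : ℕ∞) ≠ ⊤)
    obtain ⟨p, hp⟩ := SimpleGraph.exists_walk_of_edist_ne_top hne
    rw [← hEq] at hp
    have hlen : p.length = D (q, j) (u, j) := by exact_mod_cast hp
    have hsub' : ∀ f ∈ p.reverse.edges, f ∈ (GG a b).edgeSet := by
      intro f hf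
      exact hsub p f (by simpa using hf)
    have hmem := vert_forced huv (u, j) (q, j) (p.reverse.transfer _ hsub') rfl rfl le_rfl
      (show (↑v : ℕ) ≤ ↑q by omega)
      (by rw [Walk.length_transfer, Walk.length_reverse, hlen]
          simp [D, Nat.dist_self, natDist_eq]; omega)
    rw [Walk.edges_transfer] at hmem
    have : e ∈ p.edges := by simpa using hmem
    exact henot (p.edges_subset_edgeSet this)

lemma monitors_horiz (i : Fin a) (q : Fin b) {u v : Fin b} (hadj : (pathGraph b).Adj u v) :
    monitors (GG a b) (i, q) s((i, u), (i, v)) := by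
  rcases pathGraph_adj.mp hadj with h | h
  · exact monitors_horiz' i q h
  · rw [Sym2.eq_swap]
    exact monitors_horiz' i q h

lemma monitors_vert (j : Fin b) (q : Fin a) {u v : Fin a} (hadj : (pathGraph a).Adj u v) :
    monitors (GG a b) (q, j) s((u, j), (v, j)) := by
  rcases pathGraph_adj.mp hadj with h | h
  · exact monitors_vert' j q h
  · rw [Sym2.eq_swap]
    exact monitors_vert' j q h


lemma not_monitors_horiz {p i : Fin a} {q u v : Fin b} (hpi : p ≠ i) (huv : u ≠ v) :
    ¬ monitors (GG a b) (p, q) s((i, u), (i, v)) := by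
  rintro ⟨y, hy⟩
  obtain ⟨r, s'⟩ := y
  apply hy
  rw [grid_edist]
  refine le_antisymm (del_edist_ge_D _ _) ?_
  have hne1 : ∀ (t t' : Fin b), s(((p : Fin a), t), (p, t')) ≠ s((i, u), (i, v)) := by
    intro t t' heq
    rcases Sym2.eq_iff.mp heq with ⟨h1, h2⟩ | ⟨h1, h2⟩ <;>
      exact hpi (congrArg Prod.fst h1)
  have hne2 : ∀ (t t' : Fin a) (w : Fin b), s((t, w), (t', w)) ≠ s((i, u), (i, v)) := by
    intro t t' w heq
    rcases Sym2.eq_iff.mp heq with ⟨h1, h2⟩ | ⟨h1, h2⟩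
    · exact huv ((congrArg Prod.snd h1).symm.trans (congrArg Prod.snd h2))
    · exact huv ((congrArg Prod.snd h2).symm.trans (congrArg Prod.snd h1))
  obtain ⟨W1, hl1, he1⟩ := rowWalk p q s'
  obtain ⟨W2, hl2, he2⟩ := colWalk s' p r
  have hWsub : ∀ f ∈ (W1.append W2).edges,
      f ∈ ((GG a b).deleteEdges {s((i, u), (i, v))}).edgeSet := by
    intro f hf
    rw [edgeSet_deleteEdges]
    refine ⟨(W1.append W2).edges_subset_edgeSet hf, ?_⟩
    simp only [Set.mem_singleton_iff]
    rcases List.mem_append.mp (by simpa using hf) with h | h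
    · obtain ⟨t, t', rfl⟩ := he1 f h; exact hne1 t t'
    · obtain ⟨t, t', rfl⟩ := he2 f h; exact hne2 t t' s'
  have hle := SimpleGraph.edist_le ((W1.append W2).transfer _ hWsub)
  rw [Walk.length_transfer] at hle
  refine hle.trans ?_
  rw [Nat.cast_le, Walk.length_append, hl1, hl2]
  simp only [D, natDist_eq]
  omega

lemma not_monitors_vert {p u v : Fin a} {q j : Fin b} (hqj : q ≠ j) (huv : u ≠ v) :
    ¬ monitors (GG a b) (p, q) s((u, j), (v, j)) := by
  rintro ⟨y, hy⟩
  obtain ⟨r, s'⟩ := y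
  apply hy
  rw [grid_edist]
  refine le_antisymm (del_edist_ge_D _ _) ?_
  have hne1 : ∀ (t t' : Fin a), s((t, (q : Fin b)), (t', q)) ≠ s((u, j), (v, j)) := by
    intro t t' heq
    rcases Sym2.eq_iff.mp heq with ⟨h1, h2⟩ | ⟨h1, h2⟩ <;>
      exact hqj (congrArg Prod.snd h1)
  have hne2 : ∀ (t : Fin a) (w w' : Fin b), s((t, w), (t, w')) ≠ s((u, j), (v, j)) := by
    intro t w w' heq
    rcases Sym2.eq_iff.mp heq with ⟨h1, h2⟩ | ⟨h1, h2⟩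
    · exact huv ((congrArg Prod.fst h1).symm.trans (congrArg Prod.fst h2))
    · exact huv ((congrArg Prod.fst h2).symm.trans (congrArg Prod.fst h1))
  obtain ⟨W1, hl1, he1⟩ := colWalk q p r
  obtain ⟨W2, hl2, he2⟩ := rowWalk r q s'
  have hWsub : ∀ f ∈ (W1.append W2).edges,
      f ∈ ((GG a b).deleteEdges {s((u, j), (v, j))}).edgeSet := by
    intro f hf
    rw [edgeSet_deleteEdges]
    refine ⟨(W1.append W2).edges_subset_edgeSet hf, ?_⟩
    simp only [Set.mem_singleton_iff]
    rcases List.mem_append.mp (by simpa using hf) with h | h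
    · obtain ⟨t, t', rfl⟩ := he1 f h; exact hne1 t t'
    · obtain ⟨t, t', rfl⟩ := he2 f h; exact hne2 r t t'
  have hle := SimpleGraph.edist_le ((W1.append W2).transfer _ hWsub)
  rw [Walk.length_transfer] at hle
  refine hle.trans ?_
  rw [Nat.cast_le, Walk.length_append, hl1, hl2]
  simp only [D, natDist_eq]
  omega


end DemGrid

open DemGrid in
theorem stmt7 (a b : ℕ) (ha : 2 ≤ a) (hb : 2 ≤ b) :
    dem (Fin a × Fin b) (SimpleGraph.pathGraph a □ SimpleGraph.pathGraph b) = max a b := by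
  have hlta : ∀ k : Fin (max a b), min (↑k : ℕ) (a - 1) < a := fun k => by omega
  have hltb : ∀ k : Fin (max a b), min (↑k : ℕ) (b - 1) < b := fun k => by omega
  set f : Fin (max a b) → Fin a × Fin b :=
    fun k => (⟨min ↑k (a - 1), hlta k⟩, ⟨min ↑k (b - 1), hltb k⟩) with hf
  have hinj : Function.Injective f := by
    intro k k' h
    have h1 := congrArg (fun z : Fin a × Fin b => (z.1 : ℕ)) h
    have h2 := congrArg (fun z : Fin a × Fin b => (z.2 : ℕ)) h
    simp only [hf] at h1 h2
    have hk := k.isLt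
    have hk' := k'.isLt
    exact Fin.ext (by omega)
  set M : Finset (Fin a × Fin b) := Finset.image f Finset.univ with hM
  have hcard : M.card = max a b := by
    rw [hM, Finset.card_image_of_injective _ hinj, Finset.card_univ, Fintype.card_fin]
  have hrowM : ∀ i : Fin a, ∃ x ∈ M, x.1 = i := by
    intro i
    have hi : (↑i : ℕ) < max a b := by have := i.isLt; omega
    refine ⟨f ⟨↑i, hi⟩, Finset.mem_image_of_mem f (Finset.mem_univ _), ?_⟩
    exact Fin.ext (by simp only [hf]; have := i.isLt; omega)
  have hcolM : ∀ j : Fin b, ∃ x ∈ M, x.2 = j := by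
    intro j
    have hj : (↑j : ℕ) < max a b := by have := j.isLt; omega
    refine ⟨f ⟨↑j, hj⟩, Finset.mem_image_of_mem f (Finset.mem_univ _), ?_⟩
    exact Fin.ext (by simp only [hf]; have := j.isLt; omega)
  have hdem : IsDEMSet (SimpleGraph.pathGraph a □ SimpleGraph.pathGraph b) ↑M := by
    intro e he
    induction e using Sym2.ind with
    | _ z w =>
      obtain ⟨z1, z2⟩ := z
      obtain ⟨w1, w2⟩ := w
      have hadj : (GG a b).Adj (z1, z2) (w1, w2) := he
      rcases SimpleGraph.boxProd_adj.mp hadj with ⟨h1, h2⟩ | ⟨h1, h2⟩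
      · -- rows adjacent, same column: vertical edge in column z2
        simp only at h1 h2
        rw [← h2]
        obtain ⟨x, hxM, hx2⟩ := hcolM z2
        obtain ⟨x1, x2⟩ := x
        simp only at hx2
        rw [← hx2]
        exact ⟨(x1, x2), hxM, monitors_vert x2 x1 h1⟩
      · -- columns adjacent, same row
        simp only at h1 h2
        rw [← h2]
        obtain ⟨x, hxM, hx1⟩ := hrowM z1
        obtain ⟨x1, x2⟩ := x
        simp only at hx1
        rw [← hx1]
        exact ⟨(x1, x2), hxM, monitors_horiz x1 x2 h1⟩
  have hlb : ∀ N : Finset (Fin a × Fin b),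
      IsDEMSet (SimpleGraph.pathGraph a □ SimpleGraph.pathGraph b) ↑N → max a b ≤ N.card := by
    intro N hN
    have hrows : ∀ i : Fin a, ∃ x ∈ N, x.1 = i := by
      intro i
      have hadj : (GG a b).Adj (i, ⟨0, by omega⟩) (i, ⟨1, by omega⟩) :=
        SimpleGraph.boxProd_adj.mpr (Or.inr ⟨pathGraph_adj.mpr (Or.inl rfl), rfl⟩)
      obtain ⟨x, hxN, hmon⟩ :=
        hN s((i, (⟨0, by omega⟩ : Fin b)), (i, (⟨1, by omega⟩ : Fin b))) hadj
      refine ⟨x, hxN, ?_⟩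
      by_contra hne
      obtain ⟨x1, x2⟩ := x
      exact not_monitors_horiz (by simpa using hne) (Fin.ne_of_val_ne (by simp)) hmon
    have hcols : ∀ j : Fin b, ∃ x ∈ N, x.2 = j := by
      intro j
      have hadj : (GG a b).Adj (⟨0, by omega⟩, j) (⟨1, by omega⟩, j) :=
        SimpleGraph.boxProd_adj.mpr (Or.inl ⟨pathGraph_adj.mpr (Or.inl rfl), rfl⟩)
      obtain ⟨x, hxN, hmon⟩ :=
        hN s(((⟨0, by omega⟩ : Fin a), j), ((⟨1, by omega⟩ : Fin a), j)) hadj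
      refine ⟨x, hxN, ?_⟩
      by_contra hne
      obtain ⟨x1, x2⟩ := x
      exact not_monitors_vert (by simpa using hne) (Fin.ne_of_val_ne (by simp)) hmon
    choose g hg1 hg2 using hrows
    choose g' hg1' hg2' using hcols
    have hga : a ≤ N.card := by
      have hIn : Set.InjOn g ↑(Finset.univ : Finset (Fin a)) := fun i _ j _ hij => by
        rw [← hg2 i, ← hg2 j, hij]
      have := Finset.card_le_card_of_injOn g (fun i _ => hg1 i) hIn
      simpa using this
    have hgb : b ≤ N.card := by
      have hIn : Set.InjOn g' ↑(Finset.univ : Finset (Fin b)) := fun i _ j _ hij => by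
        rw [← hg2' i, ← hg2' j, hij]
      have := Finset.card_le_card_of_injOn g' (fun i _ => hg1' i) hIn
      simpa using this
    exact max_le hga hgb
  unfold dem
  apply le_antisymm
  · exact Nat.sInf_le ⟨M, hcard, hdem⟩
  · refine le_csInf ⟨max a b, M, hcard, hdem⟩ ?_
    rintro k ⟨N, rfl, hNdem⟩
    exact hlb N hNdem
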